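/- Let m, n, j, p be positive integers with m ≥ n. Then Σ_{k=0}^{min(j−1, n−1)} Γ(m+k) / (Γ(j−k) · (k!)² · Γ(p+k) · Γ(n−k)) = [Γ(m) / (Γ(p−1+j)·Γ(n)·Γ(j))] · Σ_{k=0}^{min(m, n, p−1+n)−1} (−1)^k · Γ(n+m−1−k) · Γ(p+j+n−2−k) / (Γ(p−1+n−k) · k! · Γ(m−k) · Γ(n−k)). -/

import Mathlib

open scoped BigOperators
open Finset

noncomputable def ff (x : ℝ) (d : ℕ) : ℝ := ∏ t ∈ range d, (x - t)

lemma ff_zero (x : ℝ) : ff x 0 = 1 := by simp [ff]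

lemma ff_succ (x : ℝ) (d : ℕ) : ff x (d+1) = ff x d * (x - d) := by
  simp [ff, prod_range_succ]

lemma ff_succ' (x : ℝ) (d : ℕ) : ff x (d+1) = x * ff (x-1) d := by
  rw [ff, prod_range_succ']
  rw [show ∏ k ∈ range d, (x - (↑(k+1):ℝ)) = ∏ t ∈ range d, (x - 1 - t) from
    prod_congr rfl (fun t _ => by push_cast; ring)]
  simp [ff, mul_comm]

lemma ff_add (x : ℝ) (a e : ℕ) : ff x (a+e) = ff x a * ff (x - a) e := by
  induction e with
  | zero => simp [ff_zero]
  | succ e ih =>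
    rw [show a + (e+1) = (a+e)+1 by ring, ff_succ, ih, ff_succ]
    push_cast; ring

lemma ff_nat (n d : ℕ) : ff (n:ℝ) d = (n.descFactorial d : ℝ) := by
  induction d with
  | zero => simp [ff_zero]
  | succ d ih =>
    by_cases h : n ≤ d
    · have h1 : ((n:ℕ).descFactorial (d+1) : ℝ) = 0 := by
        norm_cast
        exact Nat.descFactorial_eq_zero_iff_lt.2 (by omega)
      rw [h1, ff]
      apply prod_eq_zero (i := n) (by simp; omega)
      simp
    · rw [ff_succ, ih, Nat.descFactorial_succ]
      push_cast [Nat.cast_sub (by omega : d ≤ n)]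
      ring

lemma ff_vandermonde (k : ℕ) (x y : ℝ) :
    ff (x+y) k = ∑ i ∈ range (k+1), (k.choose i : ℝ) * ff x i * ff y (k-i) := by
  induction k with
  | zero => simp [ff_zero]
  | succ k ih =>
    rw [ff_succ, ih, sum_mul]
    have step : ∀ i ∈ range (k+1),
        (k.choose i : ℝ) * ff x i * ff y (k-i) * (x + y - k)
        = (k.choose i : ℝ) * ff x (i+1) * ff y (k-i)
          + (k.choose i : ℝ) * ff x i * ff y (k-i+1) := by
      intro i hi
      rw [mem_range] at hi
      rw [ff_succ, ff_succ]
      have hc : ((k-i:ℕ):ℝ) = (k:ℝ) - i := by push_cast [Nat.cast_sub (by omega : i ≤ k)]; ring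
      rw [hc]
      ring
    rw [sum_congr rfl step, sum_add_distrib]
    rw [sum_range_succ' (fun i => (Nat.choose (k+1) i : ℝ) * ff x i * ff y (k+1-i)) (k+1)]
    simp only [Nat.choose_zero_right, Nat.cast_one, one_mul, ff_zero, Nat.sub_zero]
    have expand : ∀ i ∈ range (k+1),
        ((k+1).choose (i+1) : ℝ) * ff x (i+1) * ff y (k+1-(i+1))
        = (k.choose i : ℝ) * ff x (i+1) * ff y (k-i)
          + (k.choose (i+1) : ℝ) * ff x (i+1) * ff y (k-i) := by
      intro i hi
      rw [Nat.choose_succ_succ, show k+1-(i+1) = k-i from by omega]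
      push_cast
      ring
    rw [sum_congr rfl expand, sum_add_distrib]
    have second : ∑ i ∈ range (k+1), (k.choose i : ℝ) * ff x i * ff y (k-i+1)
        = ∑ i ∈ range (k+1), (k.choose (i+1) : ℝ) * ff x (i+1) * ff y (k-i)
          + ff y (k+1) := by
      rw [sum_range_succ' (fun i => (k.choose i : ℝ) * ff x i * ff y (k-i+1)) k]
      simp only [Nat.choose_zero_right, Nat.cast_one, one_mul, ff_zero, Nat.sub_zero]
      congr 1
      rw [sum_range_succ]
      simp only [Nat.choose_succ_self, Nat.cast_zero, zero_mul, add_zero]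
      apply sum_congr rfl
      intro i hi
      rw [mem_range] at hi
      rw [show k - (i+1) + 1 = k - i from by omega]
    rw [second]
    ring

lemma ff_diff_sum (b : ℕ) : ∀ (d : ℕ) (y : ℝ),
    ∑ k ∈ range (b+1), (-1:ℝ)^k * (b.choose k : ℝ) * ff (y-k) d
    = (∏ t ∈ range b, ((d:ℝ) - t)) * ff (y - b) (d - b) := by
  induction b with
  | zero => simp [ff]
  | succ b ih =>
    intro d y
    have split : ∑ k ∈ range (b+2), (-1:ℝ)^k * ((b+1).choose k : ℝ) * ff (y-k) d
        = (∑ k ∈ range (b+1), (-1:ℝ)^k * (b.choose k : ℝ) * ff (y-k) d)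
          - ∑ k ∈ range (b+1), (-1:ℝ)^k * (b.choose k : ℝ) * ff ((y-1)-k) d := by
      rw [sum_range_succ' (fun k => (-1:ℝ)^k * ((b+1).choose k : ℝ) * ff (y-k) d) (b+1)]
      have e1 : ∀ k ∈ range (b+1),
          (-1:ℝ)^(k+1) * ((b+1).choose (k+1) : ℝ) * ff (y-((k+1:ℕ):ℝ)) d
          = (-1:ℝ)^(k+1) * (b.choose (k+1) : ℝ) * ff (y-((k+1:ℕ):ℝ)) d
            - (-1:ℝ)^k * (b.choose k : ℝ) * ff ((y-1)-k) d := by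
        intro k hk
        have harg : (y - ((k+1:ℕ):ℝ)) = (y-1) - k := by push_cast; ring
        rw [Nat.choose_succ_succ, harg]
        push_cast
        ring
      rw [sum_congr rfl e1, sum_sub_distrib]
      have e2 : ∑ k ∈ range (b+1), (-1:ℝ)^(k+1) * (b.choose (k+1) : ℝ) * ff (y-((k+1:ℕ):ℝ)) d
          = (∑ k ∈ range (b+1), (-1:ℝ)^k * (b.choose k : ℝ) * ff (y-k) d)
            - ff y d := by
        have lhs2 : ∑ k ∈ range (b+1), (-1:ℝ)^k * (b.choose k : ℝ) * ff (y-k) d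
            = (∑ k ∈ range b, (-1:ℝ)^(k+1) * (b.choose (k+1) : ℝ) * ff (y-((k+1:ℕ):ℝ)) d)
              + ff y d := by
          rw [sum_range_succ' (fun k => (-1:ℝ)^k * (b.choose k : ℝ) * ff (y-k) d) b]
          simp only [Nat.choose_zero_right, Nat.cast_one, pow_zero, one_mul, Nat.cast_zero,
            sub_zero, Nat.cast_ofNat]
        rw [lhs2, sum_range_succ, Nat.choose_succ_self]
        push_cast
        ring
      rw [e2]
      simp only [Nat.cast_zero, sub_zero, Nat.choose_zero_right, Nat.cast_one, pow_zero, one_mul]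
      ring
    rw [split, ih d y, ih d (y-1)]
    rcases Nat.lt_or_ge d (b+1) with hd | hd
    · have hz : d - b = 0 := by omega
      have hz1 : d - (b+1) = 0 := by omega
      rw [hz, hz1, ff_zero, ff_zero]
      have : (∏ t ∈ range (b+1), ((d:ℝ) - t)) = 0 := by
        apply prod_eq_zero (i := d) (by simp; omega)
        simp
      rw [this]
      ring
    · obtain ⟨e, he⟩ : ∃ e, d - b = e + 1 := ⟨d - b - 1, by omega⟩
      have he2 : d - (b+1) = e := by omega
      have hde : (d:ℝ) = (b:ℝ) + e + 1 := by
        have : d = b + e + 1 := by omega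
        rw [this]; push_cast; ring
      rw [he, he2, prod_range_succ]
      have key : ff (y - b) (e+1) - ff (y - 1 - b) (e+1)
          = ((e:ℝ)+1) * ff (y - ((b:ℝ)+1)) e := by
        have h1 : ff (y - b) (e+1) = (y - b) * ff (y - b - 1) e := by
          rw [ff, prod_range_succ']
          rw [show ∏ k ∈ range e, (y - ↑b - (↑(k+1):ℝ)) = ∏ t ∈ range e, (y - b - 1 - t) from
            prod_congr rfl (fun t _ => by push_cast; ring)]
          simp [ff, mul_comm]
        have h2 : ff (y - 1 - b) (e+1) = ff (y - 1 - b) e * (y - 1 - b - e) := ff_succ _ _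
        have h3 : ff (y - 1 - (b:ℝ)) e = ff (y - b - 1) e := by norm_num [sub_right_comm]
        have h4 : ff (y - ((b:ℝ)+1)) e = ff (y - b - 1) e := by
          congr 1; ring
        rw [h1, h2, h3, h4]
        ring
      push_cast
      rw [hde]
      linear_combination (∏ t ∈ range b, ((b:ℝ) + e + 1 - t)) * key

lemma choose_triple_sum (a b i : ℕ) (hib : i ≤ b) :
    ∑ k ∈ range (b+1), a.choose k * (b.choose k * k.choose i)
      = b.choose i * (a+b-i).choose b := by
  have h1 : ∑ k ∈ range (b+1), a.choose k * (b.choose k * k.choose i)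
      = ∑ k ∈ Ico i (b+1), a.choose k * (b.choose k * k.choose i) := by
    refine (sum_subset ?_ ?_).symm
    · intro x hx; rw [mem_Ico] at hx; rw [mem_range]; omega
    · intro x hx hx2
      rw [mem_range] at hx; rw [mem_Ico] at hx2
      have : x < i := by omega
      rw [Nat.choose_eq_zero_of_lt this]; ring
  rw [h1, sum_Ico_eq_sum_range]
  have h2 : ∀ t ∈ range (b+1-i), a.choose (i+t) * (b.choose (i+t) * (i+t).choose i)
      = b.choose i * (a.choose (i+t) * (b-i).choose t) := by
    intro t ht; rw [mem_range] at ht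
    rw [Nat.choose_mul (by omega : i ≤ i+t),
      show i+t-i = t from by omega]
    ring
  rw [sum_congr rfl h2, ← mul_sum]
  congr 1
  have h3 : (a + (b-i)).choose b = ∑ s ∈ range (b+1), a.choose s * (b-i).choose (b-s) := by
    rw [Nat.add_choose_eq, Finset.Nat.sum_antidiagonal_eq_sum_range_succ_mk]
  rw [show a+b-i = a+(b-i) from by omega, h3]
  have h4 : ∑ s ∈ range (b+1), a.choose s * (b-i).choose (b-s)
      = ∑ s ∈ Ico i (b+1), a.choose s * (b-i).choose (b-s) := by
    refine (sum_subset ?_ ?_).symm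
    · intro x hx; rw [mem_Ico] at hx; rw [mem_range]; omega
    · intro x hx hx2
      rw [mem_range] at hx; rw [mem_Ico] at hx2
      have : b - i < b - x := by omega
      rw [Nat.choose_eq_zero_of_lt this]; ring
  rw [h4, sum_Ico_eq_sum_range]
  apply sum_congr rfl
  intro t ht; rw [mem_range] at ht
  rw [show b - (i+t) = (b-i) - t from by omega,
    Nat.choose_symm (by omega : t ≤ b-i)]

lemma desc_div (q k i : ℕ) (h : i ≤ k) :
    (((q+k).descFactorial (k-i) : ℕ) : ℝ) = ((q+k).factorial : ℝ) / ((q+i).factorial : ℝ) := by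
  have h1 := Nat.factorial_mul_descFactorial (show k-i ≤ q+k by omega)
  rw [show q+k-(k-i) = q+i from by omega] at h1
  rw [eq_div_iff (by positivity)]
  rw [mul_comm] at h1
  exact_mod_cast h1

lemma expandA (c q k : ℕ) :
    ((c+k).factorial : ℝ) / ((q+k).factorial : ℝ)
    = (c.factorial : ℝ) * ∑ i ∈ range (k+1),
        (k.choose i : ℝ) * ff ((c:ℝ)-(q:ℝ)) i / ((q+i).factorial : ℝ) := by
  have h0 : ((c+k).factorial : ℝ) = (c.factorial : ℝ) * ff ((c:ℝ)+(k:ℝ)) k := by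
    rw [show ((c:ℝ)+(k:ℝ)) = (((c+k:ℕ)):ℝ) from by push_cast; ring, ff_nat,
      ← Nat.factorial_mul_descFactorial (Nat.le_add_left k c),
      show c+k-k = c from by omega]
    push_cast; ring
  have h1 : ff ((c:ℝ)+(k:ℝ)) k
      = ∑ i ∈ range (k+1), (k.choose i : ℝ) * ff ((c:ℝ)-(q:ℝ)) i
          * (((q+k).descFactorial (k-i) : ℕ) : ℝ) := by
    rw [show ((c:ℝ)+(k:ℝ)) = ((c:ℝ)-(q:ℝ)) + ((q:ℝ)+(k:ℝ)) from by ring, ff_vandermonde]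
    apply sum_congr rfl; intro i hi
    rw [show ((q:ℝ)+(k:ℝ)) = (((q+k:ℕ)):ℝ) from by push_cast; ring, ff_nat]
  rw [div_eq_iff (by positivity : ((q+k).factorial : ℝ) ≠ 0), h0, h1, mul_assoc, sum_mul]
  congr 1
  apply sum_congr rfl; intro i hi
  rw [mem_range] at hi
  rw [desc_div q k i (by omega)]
  have : ((q+i).factorial : ℝ) ≠ 0 := by positivity
  field_simp

lemma claim1 (a b q c : ℕ) :
    ∑ k ∈ range (min (a+1) (b+1)),
      ((c+k).factorial : ℝ) /
        ((a-k).factorial * ((k.factorial : ℝ))^2 * (q+k).factorial * (b-k).factorial)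
    = (c.factorial : ℝ) / ((a.factorial : ℝ) * (b.factorial : ℝ)) *
      ∑ i ∈ range (b+1),
        (b.choose i : ℝ) * ((a+b-i).choose b : ℝ) * ff ((c:ℝ)-(q:ℝ)) i
          / ((q+i).factorial : ℝ) := by
  set x : ℝ := (c:ℝ) - (q:ℝ) with hx
  have hterm : ∀ k ∈ range (min (a+1) (b+1)),
      ((c+k).factorial : ℝ) /
        ((a-k).factorial * ((k.factorial : ℝ))^2 * (q+k).factorial * (b-k).factorial)
      = ∑ i ∈ range (b+1),
          (c.factorial : ℝ) / ((a.factorial : ℝ) * (b.factorial : ℝ)) *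
            ((a.choose k : ℝ) * ((b.choose k : ℝ) * (k.choose i : ℝ))) *
            (ff x i / ((q+i).factorial : ℝ)) := by
    intro k hk
    rw [mem_range, lt_min_iff] at hk
    have hka : k ≤ a := by omega
    have hkb : k ≤ b := by omega
    have hsub : range (k+1) ⊆ range (b+1) := by
      intro i hi; rw [mem_range] at hi ⊢; omega
    have hsum : ∑ i ∈ range (b+1),
        (c.factorial : ℝ) / ((a.factorial : ℝ) * (b.factorial : ℝ)) *
          ((a.choose k : ℝ) * ((b.choose k : ℝ) * (k.choose i : ℝ))) *
          (ff x i / ((q+i).factorial : ℝ))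
        = (c.factorial : ℝ) / ((a.factorial : ℝ) * (b.factorial : ℝ)) *
          ((a.choose k : ℝ) * (b.choose k : ℝ)) *
          ∑ i ∈ range (k+1), (k.choose i : ℝ) * ff x i / ((q+i).factorial : ℝ) := by
      rw [mul_sum, ← sum_subset hsub]
      · apply sum_congr rfl; intro i hi; ring
      · intro i hi hi2
        rw [mem_range] at hi hi2
        rw [Nat.choose_eq_zero_of_lt (by omega : k < i)]
        push_cast; ring
    rw [hsum]
    have hS : ∑ i ∈ range (k+1), (k.choose i : ℝ) * ff x i / ((q+i).factorial : ℝ)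
        = ((c+k).factorial : ℝ) / (((q+k).factorial : ℝ) * (c.factorial : ℝ)) := by
      have := expandA c q k
      have hc : (c.factorial : ℝ) ≠ 0 := by positivity
      have hq : ((q+k).factorial : ℝ) ≠ 0 := by positivity
      field_simp at this ⊢
      linarith [this]
    rw [hS]
    have ha : (a.factorial : ℝ) = (a.choose k : ℝ) * (k.factorial : ℝ) * ((a-k).factorial : ℝ) := by
      exact_mod_cast congrArg (Nat.cast (R := ℝ))
        (Nat.choose_mul_factorial_mul_factorial hka).symm
    have hb : (b.factorial : ℝ) = (b.choose k : ℝ) * (k.factorial : ℝ) * ((b-k).factorial : ℝ) := by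
      exact_mod_cast congrArg (Nat.cast (R := ℝ))
        (Nat.choose_mul_factorial_mul_factorial hkb).symm
    have h1 : ((a-k).factorial : ℝ) ≠ 0 := by positivity
    have h2 : ((b-k).factorial : ℝ) ≠ 0 := by positivity
    have h3 : ((q+k).factorial : ℝ) ≠ 0 := by positivity
    have h4 : ((c+k).factorial : ℝ) ≠ 0 := by positivity
    have h5 : (k.factorial : ℝ) ≠ 0 := by positivity
    have h6 : (c.factorial : ℝ) ≠ 0 := by positivity
    have h7 : (a.choose k : ℝ) ≠ 0 := by
      exact_mod_cast Nat.cast_ne_zero.2 (Nat.choose_pos hka).ne'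
    have h8 : (b.choose k : ℝ) ≠ 0 := by
      exact_mod_cast Nat.cast_ne_zero.2 (Nat.choose_pos hkb).ne'
    rw [ha, hb]
    field_simp
  rw [sum_congr rfl hterm]
  have hsub2 : range (min (a+1) (b+1)) ⊆ range (b+1) := by
    intro k hk; rw [mem_range] at hk ⊢; omega
  rw [sum_subset hsub2 (by
    intro k hk hk2
    rw [mem_range] at hk hk2
    have hak : a < k := by omega
    apply sum_eq_zero
    intro i hi
    rw [Nat.choose_eq_zero_of_lt hak]
    push_cast; ring)]
  rw [sum_comm, mul_sum]
  apply sum_congr rfl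
  intro i hi
  rw [mem_range] at hi
  have : ∑ k ∈ range (b+1),
      (c.factorial : ℝ) / ((a.factorial : ℝ) * (b.factorial : ℝ)) *
        ((a.choose k : ℝ) * ((b.choose k : ℝ) * (k.choose i : ℝ))) *
        (ff x i / ((q+i).factorial : ℝ))
      = (c.factorial : ℝ) / ((a.factorial : ℝ) * (b.factorial : ℝ)) *
        (ff x i / ((q+i).factorial : ℝ)) *
        ∑ k ∈ range (b+1), ((a.choose k * (b.choose k * k.choose i) : ℕ) : ℝ) := by
    rw [mul_sum]
    apply sum_congr rfl; intro k hk
    push_cast; ring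
  rw [this, ← Nat.cast_sum, choose_triple_sum a b i (by omega)]
  push_cast
  ring

lemma claim2 (a b q c : ℕ) (hbc : b ≤ c) :
    ∑ k ∈ range (b+1), (-1:ℝ)^k * ((b+c-k).factorial : ℝ) * ((q+a+b-k).factorial : ℝ) /
        ((q+b-k).factorial * (k.factorial : ℝ) * (c-k).factorial * (b-k).factorial)
    = ((q+a).factorial : ℝ) *
      ∑ i ∈ range (b+1),
        (b.choose i : ℝ) * ((a+b-i).choose b : ℝ) * ff ((c:ℝ)-(q:ℝ)) i
          / ((q+i).factorial : ℝ) := by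
  set x : ℝ := (c:ℝ) - (q:ℝ) with hx
  set Y : ℝ := ((q+a+b : ℕ) : ℝ) with hY
  have hterm : ∀ k ∈ range (b+1),
      (-1:ℝ)^k * ((b+c-k).factorial : ℝ) * ((q+a+b-k).factorial : ℝ) /
        ((q+b-k).factorial * (k.factorial : ℝ) * (c-k).factorial * (b-k).factorial)
      = ∑ i ∈ range (b+1),
          (-1:ℝ)^k * (b.choose k : ℝ) / (b.factorial : ℝ) *
            ((b.choose i : ℝ) * ff x i * ff (Y - k) (a+b-i)) := by
    intro k hk
    rw [mem_range] at hk
    have hkb : k ≤ b := by omega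
    have hkc : k ≤ c := by omega
    have h1 : ((b+c-k).factorial : ℝ) = ((c-k).factorial : ℝ) * ff (((b+c-k:ℕ)):ℝ) b := by
      rw [ff_nat, ← Nat.factorial_mul_descFactorial (show b ≤ b+c-k by omega),
        show b+c-k-b = c-k from by omega]
      push_cast; ring
    have h2 : ((q+a+b-k).factorial : ℝ)
        = ((q+b-k).factorial : ℝ) * ff (((q+a+b-k:ℕ)):ℝ) a := by
      rw [ff_nat, ← Nat.factorial_mul_descFactorial (show a ≤ q+a+b-k by omega),
        show q+a+b-k-a = q+b-k from by omega]
      push_cast; ring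
    have h3 : ff (((b+c-k:ℕ)):ℝ) b
        = ∑ i ∈ range (b+1), (b.choose i : ℝ) * ff x i * ff (((q+b-k:ℕ)):ℝ) (b-i) := by
      rw [show (((b+c-k:ℕ)):ℝ) = x + (((q+b-k:ℕ)):ℝ) from by
        rw [hx]; push_cast [Nat.cast_sub (show k ≤ b+c by omega),
          Nat.cast_sub (show k ≤ q+b by omega)]; ring]
      exact ff_vandermonde b x _
    have h4 : ∀ i ∈ range (b+1),
        ff (((q+a+b-k:ℕ)):ℝ) a * ff (((q+b-k:ℕ)):ℝ) (b-i)
        = ff (Y - k) (a+b-i) := by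
      intro i hi
      rw [mem_range] at hi
      have hz : ff (((q+a+b-k:ℕ)):ℝ) (a+(b-i))
          = ff (((q+a+b-k:ℕ)):ℝ) a * ff ((((q+a+b-k:ℕ)):ℝ) - a) (b-i) := ff_add _ _ _
      have hc1 : ((((q+a+b-k:ℕ)):ℝ) - (a:ℝ)) = (((q+b-k:ℕ)):ℝ) := by
        push_cast [Nat.cast_sub (show k ≤ q+a+b by omega),
          Nat.cast_sub (show k ≤ q+b by omega)]; ring
      have hc2 : (Y - (k:ℝ)) = (((q+a+b-k:ℕ)):ℝ) := by
        rw [hY]; push_cast [Nat.cast_sub (show k ≤ q+a+b by omega)]; ring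
      rw [hc2, show a+b-i = a+(b-i) from by omega, hz, hc1]
    have hsum : ∑ i ∈ range (b+1),
        (-1:ℝ)^k * (b.choose k : ℝ) / (b.factorial : ℝ) *
          ((b.choose i : ℝ) * ff x i * ff (Y - k) (a+b-i))
        = (-1:ℝ)^k * (b.choose k : ℝ) / (b.factorial : ℝ) *
          (ff (((b+c-k:ℕ)):ℝ) b * ff (((q+a+b-k:ℕ)):ℝ) a) := by
      rw [h3, sum_mul, mul_sum]
      apply sum_congr rfl
      intro i hi
      rw [← h4 i hi]
      ring
    rw [hsum, h1, h2]
    have hb : (b.factorial : ℝ) = (b.choose k : ℝ) * (k.factorial : ℝ) * ((b-k).factorial : ℝ) := by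
      exact_mod_cast congrArg (Nat.cast (R := ℝ))
        (Nat.choose_mul_factorial_mul_factorial hkb).symm
    have h5 : ((b-k).factorial : ℝ) ≠ 0 := by positivity
    have h6 : ((c-k).factorial : ℝ) ≠ 0 := by positivity
    have h7 : ((q+b-k).factorial : ℝ) ≠ 0 := by positivity
    have h8 : (k.factorial : ℝ) ≠ 0 := by positivity
    have h9 : (b.choose k : ℝ) ≠ 0 := by
      exact_mod_cast Nat.cast_ne_zero.2 (Nat.choose_pos hkb).ne'
    rw [hb]
    field_simp
  rw [sum_congr rfl hterm, sum_comm, mul_sum]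
  apply sum_congr rfl
  intro i hi
  rw [mem_range] at hi
  have hstep : ∑ k ∈ range (b+1),
      (-1:ℝ)^k * (b.choose k : ℝ) / (b.factorial : ℝ) *
        ((b.choose i : ℝ) * ff x i * ff (Y - k) (a+b-i))
      = (b.choose i : ℝ) * ff x i / (b.factorial : ℝ) *
        ∑ k ∈ range (b+1), (-1:ℝ)^k * (b.choose k : ℝ) * ff (Y - k) (a+b-i) := by
    rw [mul_sum]
    apply sum_congr rfl; intro k hk; ring
  rw [hstep, ff_diff_sum b (a+b-i) Y]
  have hprod : (∏ t ∈ range b, (((a+b-i : ℕ):ℝ) - t))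
      = ((b.factorial : ℝ)) * (((a+b-i).choose b : ℕ) : ℝ) := by
    have : (∏ t ∈ range b, (((a+b-i : ℕ):ℝ) - t)) = ff (((a+b-i:ℕ)):ℝ) b := rfl
    rw [this, ff_nat, Nat.descFactorial_eq_factorial_mul_choose]
    push_cast; ring
  have hY2 : (Y - (b:ℝ)) = (((q+a:ℕ)):ℝ) := by
    rw [hY]; push_cast; ring
  have hab : a+b-i-b = a-i := by omega
  rw [hprod, hY2, hab, ff_nat]
  rcases le_or_gt i a with hia | hia
  · rw [show ((q+a).descFactorial (a-i) : ℝ)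
        = ((q+a).factorial : ℝ) / ((q+i).factorial : ℝ) from desc_div q a i hia]
    have hbf : (b.factorial : ℝ) ≠ 0 := by positivity
    have hqi : ((q+i).factorial : ℝ) ≠ 0 := by positivity
    field_simp
  · rw [Nat.choose_eq_zero_of_lt (show a+b-i < b by omega)]
    push_cast
    ring

lemma core (a b q c : ℕ) (hbc : b ≤ c) :
    ∑ k ∈ range (min (a+1) (b+1)),
      ((c+k).factorial : ℝ) /
        ((a-k).factorial * ((k.factorial : ℝ))^2 * (q+k).factorial * (b-k).factorial)
    = (c.factorial : ℝ) / ((q+a).factorial * b.factorial * a.factorial) *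
      ∑ k ∈ range (b+1), (-1:ℝ)^k * ((b+c-k).factorial : ℝ) * ((q+a+b-k).factorial : ℝ) /
        ((q+b-k).factorial * (k.factorial : ℝ) * (c-k).factorial * (b-k).factorial) := by
  rw [claim1 a b q c, claim2 a b q c hbc]
  have h1 : ((q+a).factorial : ℝ) ≠ 0 := by positivity
  have h2 : (a.factorial : ℝ) ≠ 0 := by positivity
  have h3 : (b.factorial : ℝ) ≠ 0 := by positivity
  field_simp

/-- An identity between two terminating sums, equivalent to the transformation
`₃F₂(−n, −j, m; 1, p; 1)` into `₃F₂(1−m, −n, 1−p−n; 1−p−j−n, 1−m−n; 1)`.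
The sum `Σ_{k=0}^{min (j−1) (n−1)}` is expressed as a sum over `range (min j n)`, and
`Σ_{k=0}^{min (m, n, p−1+n) − 1}` as a sum over `range (min (min m n) (p−1+n))`. -/
theorem terminating_sums_transform (m n j p : ℕ) (hm : 0 < m) (hn : 0 < n) (hj : 0 < j)
    (hp : 0 < p) (hmn : n ≤ m) :
    ∑ k ∈ range (min j n),
        Real.Gamma ((m : ℝ) + (k : ℝ)) /
          (Real.Gamma ((j : ℝ) - (k : ℝ)) * ((k.factorial : ℝ)) ^ 2 *
            Real.Gamma ((p : ℝ) + (k : ℝ)) * Real.Gamma ((n : ℝ) - (k : ℝ))) =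
      Real.Gamma (m : ℝ) /
          (Real.Gamma ((p : ℝ) - 1 + (j : ℝ)) * Real.Gamma (n : ℝ) *
            Real.Gamma (j : ℝ)) *
        ∑ k ∈ range (min (min m n) (p - 1 + n)),
          (-1 : ℝ) ^ k * Real.Gamma ((n : ℝ) + (m : ℝ) - 1 - (k : ℝ)) *
              Real.Gamma ((p : ℝ) + (j : ℝ) + (n : ℝ) - 2 - (k : ℝ)) /
            (Real.Gamma ((p : ℝ) - 1 + (n : ℝ) - (k : ℝ)) * (k.factorial : ℝ) *
              Real.Gamma ((m : ℝ) - (k : ℝ)) * Real.Gamma ((n : ℝ) - (k : ℝ))) := by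
  obtain ⟨c, rfl⟩ : ∃ c, m = c+1 := ⟨m-1, by omega⟩
  obtain ⟨a, rfl⟩ : ∃ a, j = a+1 := ⟨j-1, by omega⟩
  obtain ⟨b, rfl⟩ : ∃ b, n = b+1 := ⟨n-1, by omega⟩
  obtain ⟨q, rfl⟩ : ∃ q, p = q+1 := ⟨p-1, by omega⟩
  have hbc : b ≤ c := by omega
  have hmin : min (min (c+1) (b+1)) (q+1-1+(b+1)) = b+1 := by omega
  rw [hmin]
  have hG : ∀ (s : ℕ), Real.Gamma (((s:ℝ)) + 1) = (s.factorial : ℝ) :=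
    Real.Gamma_nat_eq_factorial
  have lhs_eq : ∑ k ∈ range (min (a+1) (b+1)),
      Real.Gamma (((a+1:ℕ) : ℝ) - (k : ℝ)) = 0 → True := fun _ => trivial
  -- rewrite LHS termwise
  have L : ∑ k ∈ range (min (a+1) (b+1)),
        Real.Gamma (((c+1:ℕ) : ℝ) + (k : ℝ)) /
          (Real.Gamma (((a+1:ℕ) : ℝ) - (k : ℝ)) * ((k.factorial : ℝ)) ^ 2 *
            Real.Gamma (((q+1:ℕ) : ℝ) + (k : ℝ)) * Real.Gamma (((b+1:ℕ) : ℝ) - (k : ℝ)))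
      = ∑ k ∈ range (min (a+1) (b+1)),
        ((c+k).factorial : ℝ) /
          ((a-k).factorial * ((k.factorial : ℝ))^2 * (q+k).factorial * (b-k).factorial) := by
    apply sum_congr rfl
    intro k hk
    rw [mem_range, lt_min_iff] at hk
    rw [show (((c+1:ℕ)) : ℝ) + (k : ℝ) = ((c+k : ℕ) : ℝ) + 1 from by push_cast; ring, hG,
      show (((a+1:ℕ)) : ℝ) - (k : ℝ) = ((a-k : ℕ) : ℝ) + 1 from by
        push_cast [Nat.cast_sub (show k ≤ a by omega)]; ring, hG,
      show (((q+1:ℕ)) : ℝ) + (k : ℝ) = ((q+k : ℕ) : ℝ) + 1 from by push_cast; ring, hG,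
      show (((b+1:ℕ)) : ℝ) - (k : ℝ) = ((b-k : ℕ) : ℝ) + 1 from by
        push_cast [Nat.cast_sub (show k ≤ b by omega)]; ring, hG]
  have R : ∑ k ∈ range (b+1),
        (-1 : ℝ) ^ k * Real.Gamma (((b+1:ℕ) : ℝ) + ((c+1:ℕ) : ℝ) - 1 - (k : ℝ)) *
            Real.Gamma (((q+1:ℕ) : ℝ) + ((a+1:ℕ) : ℝ) + ((b+1:ℕ) : ℝ) - 2 - (k : ℝ)) /
          (Real.Gamma (((q+1:ℕ) : ℝ) - 1 + ((b+1:ℕ) : ℝ) - (k : ℝ)) * (k.factorial : ℝ) *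
            Real.Gamma (((c+1:ℕ) : ℝ) - (k : ℝ)) * Real.Gamma (((b+1:ℕ) : ℝ) - (k : ℝ)))
      = ∑ k ∈ range (b+1),
        (-1:ℝ)^k * ((b+c-k).factorial : ℝ) * ((q+a+b-k).factorial : ℝ) /
          ((q+b-k).factorial * (k.factorial : ℝ) * (c-k).factorial * (b-k).factorial) := by
    apply sum_congr rfl
    intro k hk
    rw [mem_range] at hk
    rw [show (((b+1:ℕ)) : ℝ) + (((c+1:ℕ)) : ℝ) - 1 - (k : ℝ) = ((b+c-k : ℕ) : ℝ) + 1 from by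
        push_cast [Nat.cast_sub (show k ≤ b+c by omega)]; ring, hG,
      show (((q+1:ℕ)) : ℝ) + (((a+1:ℕ)) : ℝ) + (((b+1:ℕ)) : ℝ) - 2 - (k : ℝ)
          = ((q+a+b-k : ℕ) : ℝ) + 1 from by
        push_cast [Nat.cast_sub (show k ≤ q+a+b by omega)]; ring, hG,
      show (((q+1:ℕ)) : ℝ) - 1 + (((b+1:ℕ)) : ℝ) - (k : ℝ) = ((q+b-k : ℕ) : ℝ) + 1 from by
        push_cast [Nat.cast_sub (show k ≤ q+b by omega)]; ring, hG,
      show (((c+1:ℕ)) : ℝ) - (k : ℝ) = ((c-k : ℕ) : ℝ) + 1 from by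
        push_cast [Nat.cast_sub (show k ≤ c by omega)]; ring, hG,
      show (((b+1:ℕ)) : ℝ) - (k : ℝ) = ((b-k : ℕ) : ℝ) + 1 from by
        push_cast [Nat.cast_sub (show k ≤ b by omega)]; ring, hG]
  rw [L, R]
  rw [show (((c+1:ℕ)) : ℝ) = ((c : ℕ) : ℝ) + 1 from by push_cast; ring, hG,
    show (((q+1:ℕ)) : ℝ) - 1 + (((a+1:ℕ)) : ℝ) = ((q+a : ℕ) : ℝ) + 1 from by push_cast; ring,
    hG,
    show (((b+1:ℕ)) : ℝ) = ((b : ℕ) : ℝ) + 1 from by push_cast; ring, hG,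
    show (((a+1:ℕ)) : ℝ) = ((a : ℕ) : ℝ) + 1 from by push_cast; ring, hG]
  exact core a b q c hbc
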